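/- arXiv:1705.09183 — 5 statements merged into one kernel-verified Lean document; each statement's English description precedes it below -/
import Mathlib

section
/- Let g : ℂ → ℂ be a nonconstant entire function and δ ∈ ℂ. If the functional equation g(g(w)) = f(g(w)) − δw holds for all w ∈ ℂ, where f = g + h for some entire h, then h(g(w)) = δw for all w; if additionally δ ≠ 0, then g is injective and h is surjective, hence both g and h are affine polynomials, and thus f is affine. -/
open Polynomial Metric Filter Set

lemma poly_of_growth : ∀ (n : ℕ) (f : ℂ → ℂ), Differentiable ℂ f →
    ∀ (C R : ℝ), (∀ z : ℂ, R ≤ ‖z‖ → ‖f z‖ ≤ C * ‖z‖ ^ n) →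
    ∃ p : Polynomial ℂ, ∀ z, f z = p.eval z := by
  intro n
  induction n with
  | zero =>
    intro f hf C R hb
    obtain ⟨M, hM⟩ := (isCompact_closedBall (0:ℂ) R).exists_bound_of_continuousOn
      hf.continuous.continuousOn
    have hbd : Bornology.IsBounded (Set.range f) := by
      rw [Metric.isBounded_iff_subset_closedBall 0]
      refine ⟨max C M, ?_⟩
      rintro _ ⟨z, rfl⟩
      simp only [mem_closedBall, dist_zero_right]
      rcases le_total R ‖z‖ with hz | hz
      · have := hb z hz; simp at this; exact this.trans (le_max_left _ _)
      · exact (hM z (by simpa [mem_closedBall, dist_zero_right] using hz)).trans (le_max_right _ _)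
    obtain ⟨c, hc⟩ := hf.exists_eq_const_of_bounded hbd
    exact ⟨Polynomial.C c, fun z => by simp [hc]⟩
  | succ n ih =>
    intro f hf C R hb
    have hd : Differentiable ℂ (dslope f 0) := by
      rw [← differentiableOn_univ]
      exact (Complex.differentiableOn_dslope (by simp)).mpr hf.differentiableOn
    have hb' : ∀ z : ℂ, max R 1 ≤ ‖z‖ → ‖dslope f 0 z‖ ≤ (|C| + ‖f 0‖) * ‖z‖ ^ n := by
      intro z hz
      have hz1 : (1:ℝ) ≤ ‖z‖ := le_trans (le_max_right _ _) hz
      have hzR : R ≤ ‖z‖ := le_trans (le_max_left _ _) hz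
      have hz0 : z ≠ 0 := by
        intro h; rw [h] at hz1; simp at hz1; linarith
      rw [dslope_of_ne f hz0]
      have : slope f 0 z = (f z - f 0) / z := by
        simp [slope_def_field]
      rw [this]
      rw [norm_div]
      rw [div_le_iff₀ (by positivity)]
      calc ‖f z - f 0‖ ≤ ‖f z‖ + ‖f 0‖ := norm_sub_le _ _
        _ ≤ C * ‖z‖ ^ (n+1) + ‖f 0‖ := by linarith [hb z hzR]
        _ ≤ |C| * ‖z‖ ^ (n+1) + ‖f 0‖ * ‖z‖ ^ (n+1) := by
            have h1 : C * ‖z‖ ^ (n+1) ≤ |C| * ‖z‖ ^ (n+1) := by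
              apply mul_le_mul_of_nonneg_right (le_abs_self C) (by positivity)
            have h2 : ‖f 0‖ ≤ ‖f 0‖ * ‖z‖ ^ (n+1) := by
              nlinarith [norm_nonneg (f 0), one_le_pow₀ hz1 (n:=n+1)]
            linarith
        _ = (|C| + ‖f 0‖) * ‖z‖ ^ n * ‖z‖ := by ring
    obtain ⟨p₁, hp₁⟩ := ih (dslope f 0) hd (|C| + ‖f 0‖) (max R 1) hb'
    refine ⟨Polynomial.C (f 0) + Polynomial.X * p₁, fun z => ?_⟩
    rcases eq_or_ne z 0 with rfl | hz0
    · simp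
    · have := hp₁ z
      rw [dslope_of_ne f hz0, slope_def_field] at this
      have : (f z - f 0) / (z - 0) = p₁.eval z := this
      rw [sub_zero] at this
      field_simp at this
      simp only [eval_add, eval_C, eval_mul, eval_X]
      linear_combination this
open Polynomial Metric Filter Set Bornology Topology

lemma growth_of_inverse (g k : ℂ → ℂ) (hg : Differentiable ℂ g) (hk : Continuous k)
    (hkg : ∀ w, k (g w) = w) :
    ∃ (n : ℕ) (C R : ℝ), ∀ z : ℂ, R ≤ ‖z‖ → ‖g z‖ ≤ C * ‖z‖ ^ n := by
  -- g is proper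
  have hproper : Tendsto g (cocompact ℂ) (cocompact ℂ) := by
    rw [hasBasis_cocompact.tendsto_iff hasBasis_cocompact]
    intro K hK
    refine ⟨k '' K, hK.image hk, fun z hz => ?_⟩
    intro hgz
    exact hz ⟨g z, hgz, hkg z⟩
  have htop : Tendsto (fun z => ‖g z‖) (cocompact ℂ) atTop :=
    tendsto_norm_cocompact_atTop.comp hproper
  -- inversion sends 𝓝[≠]0 to cocompact
  have hinv : Tendsto (fun w : ℂ => w⁻¹) (𝓝[≠] (0:ℂ)) (cocompact ℂ) := by
    rw [← cobounded_eq_cocompact, ← comap_norm_atTop, tendsto_comap_iff]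
    have h1 : Tendsto (fun w : ℂ => ‖w‖) (𝓝[≠] (0:ℂ)) (𝓝[>] (0:ℝ)) := by
      rw [tendsto_nhdsWithin_iff]
      constructor
      · exact (continuous_norm.tendsto' 0 0 (by simp)).mono_left nhdsWithin_le_nhds
      · filter_upwards [self_mem_nhdsWithin] with w hw
        simpa using norm_pos_iff.mpr hw
    have := tendsto_inv_nhdsGT_zero.comp h1
    refine this.congr fun w => ?_
    simp [norm_inv]
  have hginf : Tendsto (fun w : ℂ => ‖g w⁻¹‖) (𝓝[≠] (0:ℂ)) atTop := htop.comp hinv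
  -- the auxiliary function G
  set G : ℂ → ℂ := Function.update (fun w => (g w⁻¹)⁻¹) 0 0 with hG
  have hGne : ∀ᶠ w in 𝓝[≠] (0:ℂ), G w = (g w⁻¹)⁻¹ ∧ g w⁻¹ ≠ 0 := by
    filter_upwards [hginf.eventually (eventually_ge_atTop 1), self_mem_nhdsWithin] with w hw hw0
    refine ⟨Function.update_of_ne hw0 _ _, ?_⟩
    intro h0; rw [h0] at hw; simp at hw; linarith
  have hGd : ∀ᶠ w in 𝓝[≠] (0:ℂ), DifferentiableAt ℂ G w := by
    have hopen : ∀ᶠ w in 𝓝[≠] (0:ℂ), ∀ᶠ w' in 𝓝 w, w' ≠ 0 := by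
      filter_upwards [self_mem_nhdsWithin] with w hw
      exact IsOpen.eventually_mem isOpen_compl_singleton hw
    filter_upwards [hGne, hopen, self_mem_nhdsWithin] with w hw hopen' hw0
    have hdiff : DifferentiableAt ℂ (fun w : ℂ => (g w⁻¹)⁻¹) w := by
      have : DifferentiableAt ℂ (fun w : ℂ => g w⁻¹) w :=
        (hg (w⁻¹)).comp w (differentiableAt_inv hw0)
      exact this.inv hw.2
    refine hdiff.congr_of_eventuallyEq ?_
    filter_upwards [hopen'] with w' hw'
    exact Function.update_of_ne hw' _ _
  have hGc : ContinuousAt G 0 := by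
    rw [hG, continuousAt_update_same]
    rw [tendsto_zero_iff_norm_tendsto_zero]
    have : Tendsto (fun w : ℂ => ‖g w⁻¹‖⁻¹) (𝓝[≠] (0:ℂ)) (𝓝 0) :=
      hginf.inv_tendsto_atTop
    exact this.congr fun w => by simp [norm_inv]
  have hGa : AnalyticAt ℂ G 0 :=
    Complex.analyticAt_of_differentiable_on_punctured_nhds_of_continuousAt hGd hGc
  -- order of G at 0
  have hone : analyticOrderAt G 0 ≠ ⊤ := by
    intro htop'
    have hev := analyticOrderAt_eq_top.mp htop'
    have : ∀ᶠ w in 𝓝[≠] (0:ℂ), G w = 0 := hev.filter_mono nhdsWithin_le_nhds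
    have := this.and hGne
    rcases this.exists with ⟨w, h1, h2, h3⟩
    exact h3 (inv_eq_zero.mp (h2 ▸ h1))
  obtain ⟨n, hn⟩ : ∃ n : ℕ, analyticOrderAt G 0 = n := by
    cases hord : analyticOrderAt G 0 with
    | top => exact absurd hord hone
    | coe n => exact ⟨n, rfl⟩
  obtain ⟨v, hva, hv0, hvev⟩ := (hGa.analyticOrderAt_eq_natCast (n := n)).mp hn
  -- lower bound on ‖G‖ near 0
  have hvc : ∀ᶠ w in 𝓝 (0:ℂ), ‖v 0‖ / 2 ≤ ‖v w‖ := by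
    have : Tendsto (fun w => ‖v w‖) (𝓝 0) (𝓝 ‖v 0‖) :=
      (continuous_norm.tendsto _).comp hva.continuousAt
    exact this.eventually (eventually_ge_nhds (by linarith [norm_pos_iff.mpr hv0] : ‖v 0‖ / 2 < ‖v 0‖))
  have key : ∀ᶠ w in 𝓝[≠] (0:ℂ), ‖g w⁻¹‖ ≤ (2 / ‖v 0‖) * (‖w‖⁻¹) ^ n := by
    filter_upwards [hGne, hvev.filter_mono nhdsWithin_le_nhds,
      hvc.filter_mono nhdsWithin_le_nhds, self_mem_nhdsWithin] with w hw hev hvb hw0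
    have hGw : ‖G w‖ = ‖g w⁻¹‖⁻¹ := by rw [hw.1, norm_inv]
    have hGlow : ‖w‖ ^ n * (‖v 0‖ / 2) ≤ ‖G w‖ := by
      rw [hev]; simp only [sub_zero, smul_eq_mul, norm_mul, norm_pow]
      exact mul_le_mul_of_nonneg_left hvb (by positivity)
    have hgpos : 0 < ‖g w⁻¹‖ := norm_pos_iff.mpr hw.2
    have hwpos : 0 < ‖w‖ := norm_pos_iff.mpr hw0
    have hv0pos : 0 < ‖v 0‖ := norm_pos_iff.mpr hv0
    rw [hGw] at hGlow
    rw [le_inv_comm₀ (by positivity) hgpos] at hGlow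
    rw [inv_pow]
    calc ‖g w⁻¹‖ ≤ (‖w‖ ^ n * (‖v 0‖ / 2))⁻¹ := hGlow
      _ = 2 / ‖v 0‖ * (‖w‖ ^ n)⁻¹ := by
          rw [mul_inv, inv_div]; ring
  -- convert to a statement at infinity
  rw [eventually_nhdsWithin_iff, Metric.eventually_nhds_iff] at key
  obtain ⟨ε, hε, hball⟩ := key
  refine ⟨n, 2 / ‖v 0‖, max (2 / ε) 1, fun z hz => ?_⟩
  have hz1 : (1:ℝ) ≤ ‖z‖ := le_trans (le_max_right _ _) hz
  have hz2 : 2 / ε ≤ ‖z‖ := le_trans (le_max_left _ _) hz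
  have hz0 : z ≠ 0 := by intro h; rw [h] at hz1; simp at hz1; linarith
  have hzinv : ‖z⁻¹‖ < ε ∧ z⁻¹ ≠ 0 := by
    constructor
    · have hzpos : 0 < ‖z‖ := by linarith
      rw [norm_inv, inv_lt_comm₀ hzpos hε]
      have h2 : ε⁻¹ < 2 / ε := by
        rw [div_eq_mul_inv]; nlinarith [inv_pos.mpr hε]
      linarith
    · simp [hz0]
  have := hball (by simpa [dist_eq_norm] using hzinv.1) hzinv.2
  rw [inv_inv] at this
  calc ‖g z‖ ≤ (2 / ‖v 0‖) * (‖z⁻¹‖⁻¹) ^ n := this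
    _ = (2 / ‖v 0‖) * ‖z‖ ^ n := by rw [norm_inv, inv_inv]

lemma entire_inverse_affine (g k : ℂ → ℂ) (hg : Differentiable ℂ g) (hk : Differentiable ℂ k)
    (hkg : ∀ w, k (g w) = w) (hgk : ∀ z, g (k z) = z) :
    ∃ a b : ℂ, a ≠ 0 ∧ ∀ z, g z = a * z + b := by
  obtain ⟨n, C, R, hbg⟩ := growth_of_inverse g k hg hk.continuous hkg
  obtain ⟨m, D, S, hbk⟩ := growth_of_inverse k g hk hg.continuous hgk
  obtain ⟨p, hp⟩ := poly_of_growth n g hg C R hbg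
  obtain ⟨q, hq⟩ := poly_of_growth m k hk D S hbk
  have hcomp : q.comp p = X := by
    apply Polynomial.funext
    intro z
    rw [eval_comp, ← hp, ← hq, hkg z, eval_X]
  have hdeg : q.natDegree * p.natDegree = 1 := by
    rw [← natDegree_comp, hcomp, natDegree_X]
  have hp1 : p.natDegree = 1 := Nat.dvd_one.mp ⟨q.natDegree, by rw [← hdeg]; ring⟩
  have hpne : p.coeff 1 ≠ 0 := by
    rw [← hp1]
    exact leadingCoeff_ne_zero.mpr (fun h0 => by simp [h0] at hp1)
  refine ⟨p.coeff 1, p.coeff 0, hpne, fun z => ?_⟩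
  rw [hp z]
  conv_lhs => rw [p.eq_X_add_C_of_natDegree_le_one hp1.le]
  simp


/-- Graph case `{z = g(w)}` of invariance: if `g(g w) = f(g w) - δ w` with
`f = g + h`, then `h ∘ g = δ·id`; if moreover `δ ≠ 0` then `g` is injective,
`h` is surjective, and `g`, `h`, `f` are all affine. -/
theorem stmt4 (g h : ℂ → ℂ) (hg : Differentiable ℂ g) (hh : Differentiable ℂ h)
    (hgnc : ¬ ∃ c : ℂ, ∀ w, g w = c) (δ : ℂ)
    (f : ℂ → ℂ) (hf : ∀ z, f z = g z + h z)
    (heq : ∀ w, g (g w) = f (g w) - δ * w) :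
    (∀ w, h (g w) = δ * w) ∧
    (δ ≠ 0 → Function.Injective g ∧ Function.Surjective h ∧
      (∃ a b : ℂ, ∀ z, g z = a * z + b) ∧ (∃ a b : ℂ, ∀ z, h z = a * z + b) ∧
      (∃ a b : ℂ, ∀ z, f z = a * z + b)) := by
  have part1 : ∀ w, h (g w) = δ * w := by
    intro w
    have h1 := heq w
    rw [hf (g w)] at h1
    linear_combination -h1
  refine ⟨part1, fun hδ => ?_⟩
  set k : ℂ → ℂ := fun z => δ⁻¹ * h z with hkdef
  have hkg : ∀ w, k (g w) = w := by
    intro w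
    rw [hkdef]
    simp only [part1 w]
    field_simp
  have hginj : Function.Injective g := Function.LeftInverse.injective hkg
  have hk : Differentiable ℂ k := hh.const_mul _
  have hgk : ∀ z, g (k z) = z := by
    rcases (hg.analyticAt 0).eventually_constant_or_nhds_le_map_nhds with hconst | hle
    · exfalso
      apply hgnc
      have hcg : (g : ℂ → ℂ) = fun _ => g 0 := by
        apply AnalyticOnNhd.eq_of_frequently_eq (fun z _ => hg.analyticAt z)
          (fun z _ => analyticAt_const) (z₀ := 0)
        exact (hconst.filter_mono nhdsWithin_le_nhds).frequently
      exact ⟨g 0, fun w => congrFun hcg w⟩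
    · have hev : ∀ᶠ z in 𝓝 (g 0), g (k z) = z := by
        have hrange : range g ∈ 𝓝 (g 0) := by
          apply hle
          rw [mem_map]
          simp [preimage_range]
        filter_upwards [hrange] with z hz
        obtain ⟨w, rfl⟩ := hz
        rw [hkg w]
      have hcg : (fun z => g (k z)) = fun z => z := by
        apply AnalyticOnNhd.eq_of_frequently_eq
          (fun z _ => (hg.comp hk).analyticAt z)
          (fun z _ => (differentiable_id.analyticAt z)) (z₀ := g 0)
        exact (hev.filter_mono nhdsWithin_le_nhds).frequently
      exact fun z => congrFun hcg z
  obtain ⟨a, b, ha, hgab⟩ := entire_inverse_affine g k hg hk hkg hgk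
  have hkz : ∀ z, k z = (z - b) / a := by
    intro z
    have := hgk z
    rw [hgab (k z)] at this
    field_simp
    linear_combination this
  have hhz : ∀ z, h z = (δ / a) * z + (-(δ * b) / a) := by
    intro z
    have : h z = δ * k z := by
      rw [hkdef]; field_simp
    rw [this, hkz z]
    field_simp
    ring
  have hδa : δ / a ≠ 0 := div_ne_zero hδ ha
  refine ⟨hginj, ?_, ⟨a, b, hgab⟩, ⟨δ / a, -(δ * b) / a, hhz⟩, ?_⟩
  · intro y
    refine ⟨(y - -(δ * b) / a) / (δ / a), ?_⟩
    rw [hhz]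
    field_simp
    ring
  · refine ⟨a + δ / a, b + -(δ * b) / a, fun z => ?_⟩
    rw [hf z, hgab z, hhz z]
    ring
end

section
/- Let g : ℂ → ℂ be entire and f : ℂ → ℂ entire, δ ∈ ℂ nonzero. If z = g(f(z) − δ g(z)) for all z ∈ ℂ, then g is surjective and has a right inverse, hence g is bijective entire, so g is affine; consequently f is affine as well. -/
set_option maxHeartbeats 1000000

noncomputable def Complex.abs : AbsoluteValue ℂ ℝ where
  toFun := fun z => ‖z‖
  map_mul' := norm_mul
  nonneg' := norm_nonneg
  eq_zero' _ := norm_eq_zero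
  add_le' := norm_add_le

@[simp] theorem Complex.abs_apply (z : ℂ) : Complex.abs z = ‖z‖ := rfl

theorem Complex.norm_eq_abs (z : ℂ) : ‖z‖ = Complex.abs z := rfl

open Polynomial in
lemma natDegree_le_one_of_injective (p : ℂ[X])
    (hp : Function.Injective fun z : ℂ => p.eval z) : p.natDegree ≤ 1 := by
  by_contra hdeg
  push_neg at hdeg
  have hder : ∀ w : ℂ, p.derivative.eval w = 0 := by
    intro w
    set Q := p - C (p.eval w) with hQ
    have hdQ : Q.natDegree = p.natDegree := natDegree_sub_C
    have hQ0 : Q ≠ 0 := by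
      intro h
      rw [h, natDegree_zero] at hdQ
      omega
    have hcard : Multiset.card Q.roots = Q.natDegree := by
      have := (IsAlgClosed.splits Q).natDegree_eq_card_roots.symm
      simpa [Polynomial.map_id] using this
    have hall : ∀ r ∈ Q.roots, r = w := by
      intro r hr
      have h1 : Q.eval r = 0 := (mem_roots hQ0).1 hr
      have h2 : p.eval r = p.eval w := by
        rw [hQ] at h1
        simpa [sub_eq_zero] using h1
      exact hp h2
    have hrep : Q.roots = Multiset.replicate Q.natDegree w :=
      Multiset.eq_replicate.2 ⟨hcard, hall⟩
    have hQfac : Q = C Q.leadingCoeff * (X - C w) ^ Q.natDegree := by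
      have h3 := (IsAlgClosed.splits Q).eq_prod_roots
      rw [hrep] at h3
      simpa [Multiset.map_replicate, Multiset.prod_replicate] using h3
    have hpd : p.derivative = Q.derivative := by simp [hQ]
    rw [hpd, hQfac]
    have h2 : 2 ≤ Q.natDegree := by omega
    simp [derivative_pow, zero_pow, Nat.sub_ne_zero_of_lt (by omega : 1 < Q.natDegree)]
  have hd0 : p.derivative = 0 := Polynomial.zero_of_eval_zero _ hder
  have := Polynomial.natDegree_eq_zero_of_derivative_eq_zero hd0
  omega


open Polynomial Complex Metric
open scoped NNReal

lemma exists_poly_of_growth (h : ℂ → ℂ) (hd : Differentiable ℂ h) (n : ℕ) (D R₀ : ℝ)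
    (hR₀ : 1 ≤ R₀) (hD : 0 ≤ D)
    (hb : ∀ w : ℂ, R₀ ≤ Complex.abs w → Complex.abs (h w) ≤ D * Complex.abs w ^ n) :
    ∃ p : ℂ[X], p.natDegree ≤ n ∧ ∀ z, h z = p.eval z := by
  have hball := Differentiable.hasFPowerSeriesOnBall hd (z := 0) (R := 1) one_pos
  set P := cauchyPowerSeries h 0 ((1 : ℝ≥0) : ℝ) with hP
  -- all radii give the same series
  have hsame : ∀ R : ℝ≥0, 0 < R → cauchyPowerSeries h 0 R = P := by
    intro R hR
    exact ((hd.hasFPowerSeriesOnBall 0 hR).hasFPowerSeriesAt).eq_formalMultilinearSeries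
      hball.hasFPowerSeriesAt
  -- coefficient bound
  have hcoef : ∀ k, n < k → P k = 0 := by
    intro k hk
    have key : ∀ R : ℝ, R₀ ≤ R → ‖P k‖ ≤ D * R ^ ((n : ℤ) - k) := by
      intro R hR
      have hRpos : 0 < R := lt_of_lt_of_le (by linarith) hR
      have hR1 : (0 : ℝ≥0) < R.toNNReal := by simp [hRpos]
      have e1 : cauchyPowerSeries h 0 R.toNNReal = P := hsame _ hR1
      have e2 : (R.toNNReal : ℝ) = R := Real.coe_toNNReal _ hRpos.le
      have hbd := norm_cauchyPowerSeries_le h 0 R k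
      rw [show cauchyPowerSeries h 0 R = P by rw [← e2]; exact e1] at hbd
      have hint : (∫ θ : ℝ in (0)..2 * Real.pi, ‖h (circleMap 0 R θ)‖) ≤
          (2 * Real.pi) * (D * R ^ n) := by
        have hmono : ∀ θ ∈ Set.Icc (0 : ℝ) (2 * Real.pi), ‖h (circleMap 0 R θ)‖ ≤ D * R ^ n := by
          intro θ _
          have habs : Complex.abs (circleMap 0 R θ) = R := by
            simp [norm_circleMap_zero, abs_of_pos hRpos]
          calc ‖h (circleMap 0 R θ)‖ = Complex.abs (h (circleMap 0 R θ)) := rfl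
            _ ≤ D * Complex.abs (circleMap 0 R θ) ^ n := hb _ (by rw [habs]; exact hR)
            _ = D * R ^ n := by rw [habs]
        calc (∫ θ : ℝ in (0)..2 * Real.pi, ‖h (circleMap 0 R θ)‖)
            ≤ ∫ _ : ℝ in (0)..2 * Real.pi, D * R ^ n := by
              apply intervalIntegral.integral_mono_on Real.two_pi_pos.le
              · exact ((hd.continuous.comp (continuous_circleMap 0 R)).norm).intervalIntegrable _ _
              · exact intervalIntegrable_const
              · exact hmono
          _ = (2 * Real.pi) * (D * R ^ n) := by simp; ring
      calc ‖P k‖ ≤ ((2 * Real.pi)⁻¹ * ∫ θ : ℝ in (0)..2 * Real.pi,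
              ‖h (circleMap 0 R θ)‖) * |R|⁻¹ ^ k := hbd
        _ ≤ ((2 * Real.pi)⁻¹ * ((2 * Real.pi) * (D * R ^ n))) * |R|⁻¹ ^ k := by
            apply mul_le_mul_of_nonneg_right
            · exact mul_le_mul_of_nonneg_left hint (by positivity)
            · positivity
        _ = D * R ^ ((n : ℤ) - k) := by
            rw [abs_of_pos hRpos, inv_mul_cancel_left₀ Real.two_pi_pos.ne', zpow_sub₀ hRpos.ne',
              zpow_natCast, zpow_natCast, div_eq_mul_inv, inv_pow, mul_assoc]
    -- take R → ∞
    have hlim : Filter.Tendsto (fun R : ℝ => D * R ^ ((n : ℤ) - k)) Filter.atTop (nhds 0) := by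
      have : ((n : ℤ) - k) < 0 := by omega
      have := tendsto_zpow_atTop_zero (𝕜 := ℝ) this
      simpa using this.const_mul D
    have hfin : ‖P k‖ ≤ 0 := by
      apply ge_of_tendsto hlim
      filter_upwards [Filter.eventually_ge_atTop R₀] with R hR using key R hR
    exact norm_le_zero_iff.1 hfin
  refine ⟨∑ k ∈ Finset.range (n + 1), C (P.coeff k) * X ^ k, ?_, ?_⟩
  · exact natDegree_sum_le_of_forall_le _ _ fun k hk =>
      (natDegree_C_mul_X_pow_le _ _).trans (by simpa [Nat.lt_succ_iff] using hk)
  · intro z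
    have hsum : HasSum (fun k => P k fun _ => z) (h z) := by
      have := hball.hasSum_sub (y := z) (by simp)
      simpa using this
    have : h z = ∑' k, P k fun _ => z := hsum.tsum_eq.symm
    rw [this, tsum_eq_sum (s := Finset.range (n + 1))
      (fun k hk => by rw [hcoef k (by simpa [Nat.lt_succ_iff] using hk)]; rfl)]
    rw [eval_finset_sum]
    apply Finset.sum_congr rfl
    intro k _
    rw [P.apply_eq_pow_smul_coeff, smul_eq_mul, eval_mul, eval_C, eval_pow, eval_X, mul_comm]

open Polynomial Complex Metric Set Filter
open scoped Topology NNReal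

lemma affine_of_injective {h : ℂ → ℂ} (hd : Differentiable ℂ h)
    (hi : Function.Injective h) : ∃ a b : ℂ, a ≠ 0 ∧ ∀ z, h z = a * z + b := by
  -- Step 1: lower bound outside the unit ball
  have han : AnalyticOnNhd ℂ h Set.univ := fun z _ => hd.analyticAt z
  have hopen : IsOpen (h '' ball 0 1) := by
    rcases han.is_constant_or_isOpen isPreconnected_univ with ⟨w, hw⟩ | hop
    · exact absurd (hi ((hw 0 trivial).trans (hw 1 trivial).symm)) zero_ne_one
    · exact hop _ (subset_univ _) isOpen_ball
  obtain ⟨ε, hε, hball⟩ : ∃ ε > 0, ball (h 0) ε ⊆ h '' ball 0 1 :=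
    Metric.isOpen_iff.1 hopen _ ⟨0, by simp [mem_ball], rfl⟩
  have hlow : ∀ z : ℂ, 1 ≤ Complex.abs z → ε ≤ Complex.abs (h z - h 0) := by
    intro z hz
    by_contra hc
    push_neg at hc
    obtain ⟨w, hw, hwz⟩ := hball (by simpa [mem_ball, dist_eq] using hc)
    have : w = z := hi hwz
    rw [this] at hw
    simp only [mem_ball, dist_zero_right] at hw
    exact absurd (lt_of_le_of_lt hz hw) (lt_irrefl _)
  -- Step 2: removable singularity at 0 for φ z = (h z⁻¹ - h 0)⁻¹
  set φ : ℂ → ℂ := fun z => (h z⁻¹ - h 0)⁻¹ with hφdef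
  have hne : ∀ z : ℂ, z ∈ ball (0:ℂ) 1 \ {0} → h z⁻¹ - h 0 ≠ 0 := by
    intro z hz
    have hz0 : z ≠ 0 := hz.2
    have hz1 : Complex.abs z < 1 := by simpa [mem_ball, dist_zero_right] using hz.1
    have h1 : 1 ≤ Complex.abs z⁻¹ := by
      rw [map_inv₀]
      rw [le_inv_comm₀] <;> simp [(show ‖z‖ ≤ 1 from hz1.le), AbsoluteValue.pos_iff, hz0, one_pos]
    have := hlow _ h1
    intro hcon
    rw [hcon] at this
    simp at this
    linarith
  have hφd : DifferentiableOn ℂ φ (ball (0:ℂ) 1 \ {0}) := by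
    intro z hz
    have hz0 : z ≠ 0 := hz.2
    apply DifferentiableAt.differentiableWithinAt
    exact (((hd.differentiableAt.comp z (differentiableAt_inv hz0)).sub_const (h 0)).inv
      (hne z hz))
  have hφb : BddAbove (norm ∘ φ '' (ball (0:ℂ) 1 \ {0})) := by
    refine ⟨ε⁻¹, ?_⟩
    rintro x ⟨z, hz, rfl⟩
    have hz0 : z ≠ 0 := hz.2
    have hz1 : Complex.abs z < 1 := by simpa [mem_ball, dist_zero_right] using hz.1
    have h1 : 1 ≤ Complex.abs z⁻¹ := by
      rw [map_inv₀, le_inv_comm₀] <;> simp [(show ‖z‖ ≤ 1 from hz1.le), AbsoluteValue.pos_iff, hz0, one_pos]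
    have := hlow _ h1
    simp only [Function.comp_apply, hφdef, norm_inv]
    exact inv_anti₀ hε this
  have hΦd : DifferentiableOn ℂ (Function.update φ 0 (limUnder (𝓝[≠] (0:ℂ)) φ)) (ball 0 1) :=
    Complex.differentiableOn_update_limUnder_of_bddAbove (ball_mem_nhds 0 one_pos) hφd hφb
  set Φ := Function.update φ 0 (limUnder (𝓝[≠] (0:ℂ)) φ) with hΦdef
  have hΦan : AnalyticAt ℂ Φ 0 := hΦd.analyticAt (isOpen_ball.mem_nhds (by simp [one_pos]))
  have hΦφ : ∀ z : ℂ, z ≠ 0 → Φ z = φ z := fun z hz => Function.update_of_ne hz _ _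
  -- Step 3: finite order at 0
  have hord : analyticOrderAt Φ 0 ≠ ⊤ := by
    intro htop
    rw [analyticOrderAt_eq_top] at htop
    have h1 : ∀ᶠ z in 𝓝[≠] (0:ℂ), Φ z = 0 := htop.filter_mono nhdsWithin_le_nhds
    have h2 : ∀ᶠ z in 𝓝[≠] (0:ℂ), z ∈ ball (0:ℂ) 1 \ {0} := by
      filter_upwards [self_mem_nhdsWithin,
        eventually_nhdsWithin_of_eventually_nhds
          (isOpen_ball.eventually_mem (mem_ball_self one_pos))] with z ha hb
      exact ⟨hb, ha⟩
    obtain ⟨z, hz1, hz2⟩ := (h1.and h2).exists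
    apply hne z hz2
    have := (hΦφ z hz2.2).symm.trans hz1
    rwa [hφdef, inv_eq_zero] at this
  obtain ⟨n, hn⟩ := WithTop.ne_top_iff_exists.1 hord
  obtain ⟨u, huan, hu0, huev⟩ := (hΦan.analyticOrderAt_eq_natCast (n := n)).1 hn.symm
  have hu0' : 0 < Complex.abs (u 0) := by simpa [AbsoluteValue.pos_iff] using hu0
  -- |u| is eventually at least |u 0|/2
  have hunz : ∀ᶠ z in 𝓝 (0:ℂ), Complex.abs (u 0) / 2 ≤ Complex.abs (u z) := by
    have hcont : ContinuousAt u 0 := huan.continuousAt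
    have := hcont (ball_mem_nhds (u 0) (by positivity : (0:ℝ) < Complex.abs (u 0) / 2))
    filter_upwards [this] with z hz
    have hdist : Complex.abs (u z - u 0) < Complex.abs (u 0) / 2 := by
      simpa [mem_ball, dist_eq] using hz
    have h3 : Complex.abs (u 0) - Complex.abs (u z) ≤ Complex.abs (u z - u 0) := by
      simpa [norm_sub_rev (u 0) (u z)] using norm_sub_norm_le (u 0) (u z)
    linarith
  -- concrete radius
  obtain ⟨r, hr, hrall⟩ := Metric.eventually_nhds_iff.1
    ((huev.and hunz).and (isOpen_ball.eventually_mem (mem_ball_self one_pos)))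
  -- growth bound for h
  set D : ℝ := Complex.abs (h 0) + 2 / Complex.abs (u 0) with hD
  set R₀ : ℝ := max (2 / r) 1 with hR₀def
  have hgrow : ∀ w : ℂ, R₀ ≤ Complex.abs w → Complex.abs (h w) ≤ D * Complex.abs w ^ n := by
    intro w hw
    have hw1 : 1 ≤ Complex.abs w := le_trans (le_max_right _ _) hw
    have hw0 : w ≠ 0 := by
      intro hcon; rw [hcon] at hw1; simp at hw1; linarith
    set z : ℂ := w⁻¹ with hz
    have hz0 : z ≠ 0 := inv_ne_zero hw0
    have hzr : dist z 0 < r := by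
      have h2r : 2 / r ≤ Complex.abs w := le_trans (le_max_left _ _) hw
      have hwpos : 0 < Complex.abs w := lt_of_lt_of_le zero_lt_one hw1
      rw [dist_zero_right, Complex.norm_eq_abs, hz, map_inv₀]
      have hle : (Complex.abs w)⁻¹ ≤ r / 2 := by
        rw [inv_le_comm₀ hwpos (by positivity), inv_div]
        exact h2r
      linarith
    obtain ⟨⟨hΦz, huz⟩, hzball⟩ := hrall hzr
    have hwz : z⁻¹ = w := inv_inv w
    have hin : z ∈ ball (0:ℂ) 1 \ {0} := ⟨hzball, hz0⟩
    have hne' : h w - h 0 ≠ 0 := by have := hne z hin; rwa [hwz] at this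
    have key : (h w - h 0)⁻¹ = z ^ n * u z := by
      have h5 := (hΦφ z hz0).symm.trans hΦz
      simp only [hφdef, sub_zero, smul_eq_mul, hwz] at h5
      exact h5
    have key2 : h w - h 0 = (z ^ n * u z)⁻¹ := by rw [← key, inv_inv]
    have habsz : Complex.abs z = (Complex.abs w)⁻¹ := by rw [hz, map_inv₀]
    have huzpos : 0 < Complex.abs (u z) := lt_of_lt_of_le (by positivity) huz
    have habs : Complex.abs (h w - h 0) = (Complex.abs z ^ n * Complex.abs (u z))⁻¹ := by
      rw [key2, map_inv₀, map_mul, map_pow]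
    have hfin : Complex.abs (h w - h 0) ≤ Complex.abs w ^ n * (2 / Complex.abs (u 0)) := by
      rw [habs, habsz, mul_inv, inv_pow, inv_inv]
      apply mul_le_mul_of_nonneg_left ?_ (by positivity)
      rw [inv_le_comm₀ huzpos (by positivity), inv_div]
      exact huz
    have h1n : (1:ℝ) ≤ Complex.abs w ^ n := one_le_pow₀ hw1
    calc Complex.abs (h w) ≤ Complex.abs (h w - h 0) + Complex.abs (h 0) := by
          have := Complex.abs.add_le (h w - h 0) (h 0)
          simpa using this
      _ ≤ Complex.abs w ^ n * (2 / Complex.abs (u 0)) + Complex.abs (h 0) * Complex.abs w ^ n := by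
          nlinarith [Complex.abs.nonneg (h 0)]
      _ = D * Complex.abs w ^ n := by rw [hD]; ring
  -- Step 4: conclude via polynomials
  have hDnn : 0 ≤ D := by
    rw [hD]
    have := Complex.abs.nonneg (h 0)
    have := Complex.abs.nonneg (u 0)
    positivity
  obtain ⟨p, hdeg, hpev⟩ := exists_poly_of_growth h hd n D R₀ (le_max_right _ _) hDnn hgrow
  have hinj' : Function.Injective fun z : ℂ => p.eval z := by
    intro x y hxy
    apply hi
    rw [hpev x, hpev y]
    exact hxy
  have hdeg1 : p.natDegree ≤ 1 := natDegree_le_one_of_injective p hinj'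
  have hform := Polynomial.eq_X_add_C_of_degree_le_one
    (Polynomial.natDegree_le_iff_degree_le.1 hdeg1)
  refine ⟨p.coeff 1, p.coeff 0, ?_, fun z => by rw [hpev, hform]; simp⟩
  intro hc0
  have : h 1 = h 0 := by rw [hpev, hpev, hform, hc0]; simp
  exact one_ne_zero (hi this)


/-- Graph case `{w = g(z)}` of invariance: if `z = g (f z - δ g z)` for all `z`
(with `δ ≠ 0`), then `g` is surjective and bijective, hence affine, and `f` is
affine as well. -/

theorem stmt5 (f g : ℂ → ℂ) (hf : Differentiable ℂ f) (hg : Differentiable ℂ g)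
    (δ : ℂ) (hδ : δ ≠ 0) (heq : ∀ z, z = g (f z - δ * g z)) :
    Function.Surjective g ∧ Function.Bijective g ∧
    (∃ a b : ℂ, ∀ z, g z = a * z + b) ∧ (∃ a b : ℂ, ∀ z, f z = a * z + b) := by
  set h : ℂ → ℂ := fun z => f z - δ * g z with hh
  have hhd : Differentiable ℂ h := hf.sub (hg.const_mul δ)
  have hgh : ∀ z, g (h z) = z := fun z => (heq z).symm
  have hinj : Function.Injective h := by
    intro x y hxy
    have := congrArg g hxy
    rwa [hgh, hgh] at this
  obtain ⟨a, b, ha, hab⟩ := affine_of_injective hhd hinj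
  -- explicit formula for g
  have hgform : ∀ x : ℂ, g x = a⁻¹ * x + -(b * a⁻¹) := by
    intro x
    have : h ((x - b) / a) = x := by
      rw [hab]
      field_simp
      ring
    have h2 : g x = (x - b) / a := by
      conv_lhs => rw [← this, hgh]
    rw [h2]
    field_simp
    ring
  have hgsurj : Function.Surjective g := fun w => ⟨h w, hgh w⟩
  have hginj : Function.Injective g := by
    intro x y hxy
    rw [hgform, hgform] at hxy
    have ha' : a⁻¹ ≠ 0 := inv_ne_zero ha
    field_simp at hxy
    exact add_right_cancel hxy
  refine ⟨hgsurj, ⟨hginj, hgsurj⟩, ⟨a⁻¹, -(b * a⁻¹), hgform⟩, ⟨a + δ * a⁻¹, b - δ * (b * a⁻¹), ?_⟩⟩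
  intro z
  have : f z = h z + δ * g z := by rw [hh]; ring
  rw [this, hab, hgform]
  ring
end

section
/- For α > 0 define A_α = e^{−α}/(1 − e^{−α}), η_α(x) = A_α e^{−x}, and R_α = {(z,w) ∈ ℂ² : Re z > Re w + α + η_α(Re w)}. Let F(z,w) = (e^{−z} + 2z − w, z). Then each R_α is forward invariant under F: if (z,w) ∈ R_α then F(z,w) ∈ R_α. -/
/-- Forward invariance of `R_α = {Re z > Re w + α + η_α(Re w)}` under
`F(z,w) = (e^{-z} + 2z - w, z)`, where `η_α(x) = (e^{-α}/(1-e^{-α})) e^{-x}`. -/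
theorem stmt10 (α : ℝ) (hα : 0 < α) :
    ∀ z w : ℂ,
      z.re > w.re + α + (Real.exp (-α) / (1 - Real.exp (-α))) * Real.exp (-w.re) →
      (Complex.exp (-z) + 2 * z - w).re >
        z.re + α + (Real.exp (-α) / (1 - Real.exp (-α))) * Real.exp (-z.re) := by
  intro z w h
  set A := Real.exp (-α) / (1 - Real.exp (-α)) with hA
  have hs1 : Real.exp (-α) < 1 := by
    rw [Real.exp_lt_one_iff]; linarith
  have hs0 : 0 < Real.exp (-α) := Real.exp_pos _
  have hApos : 0 < A := div_pos hs0 (by linarith)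
  have hkey : (1 + A) * Real.exp (-α) = A := by
    have hne : 1 - Real.exp (-α) ≠ 0 := by linarith
    rw [hA]
    field_simp
    ring
  have hre : -Real.exp (-z.re) ≤ (Complex.exp (-z)).re := by
    have h1 : |(Complex.exp (-z)).re| ≤ ‖Complex.exp (-z)‖ :=
      Complex.abs_re_le_norm _
    rw [Complex.norm_exp] at h1
    have h2 : (-z).re = -z.re := by simp
    rw [h2] at h1
    have := abs_le.mp h1
    linarith [this.1]
  have hexpw : 0 < Real.exp (-w.re) := Real.exp_pos _
  have hgap : w.re + α < z.re := by nlinarith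
  have hlt : Real.exp (-z.re) < Real.exp (-α) * Real.exp (-w.re) := by
    rw [← Real.exp_add]
    exact Real.exp_lt_exp.mpr (by linarith)
  have hmain : (1 + A) * Real.exp (-z.re) < A * Real.exp (-w.re) := by
    calc (1 + A) * Real.exp (-z.re) < (1 + A) * (Real.exp (-α) * Real.exp (-w.re)) := by
          apply mul_lt_mul_of_pos_left hlt (by linarith)
      _ = A * Real.exp (-w.re) := by rw [← mul_assoc, hkey]
  have hgoal : (Complex.exp (-z) + 2 * z - w).re
      = (Complex.exp (-z)).re + 2 * z.re - w.re := by simp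
  rw [hgoal]
  nlinarith [Real.exp_pos (-z.re)]
end

section
/- Let F(z,w) = (e^{−z} + 2z − w, z) and let (z₀,w₀) ∈ R_α (defined as Re z₀ > Re w₀ + α + A_α e^{−Re w₀} with A_α = e^{−α}/(1−e^{−α})), α > 0. Write (z_n, w_n) = F^n(z₀,w₀). Then Re z_n > Re z₀ + nα for all n ≥ 1, and hence Re z_n → ∞ and Re w_n → ∞. -/
/-- Along an orbit of `F(z,w) = (e^{-z} + 2z - w, z)` starting in `R_α`, one has
`Re z_n > Re z₀ + nα` for all `n ≥ 1`, hence `Re z_n → ∞` and `Re w_n → ∞`. -/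
theorem stmt11 (α : ℝ) (hα : 0 < α) (z₀ w₀ : ℂ)
    (h : z₀.re > w₀.re + α + (Real.exp (-α) / (1 - Real.exp (-α))) * Real.exp (-w₀.re))
    (F : ℂ × ℂ → ℂ × ℂ)
    (hF : ∀ p, F p = (Complex.exp (-p.1) + 2 * p.1 - p.2, p.1)) :
    (∀ n : ℕ, 1 ≤ n → z₀.re + n * α < ((F^[n]) (z₀, w₀)).1.re) ∧
    Filter.Tendsto (fun n : ℕ => ((F^[n]) (z₀, w₀)).1.re) Filter.atTop Filter.atTop ∧
    Filter.Tendsto (fun n : ℕ => ((F^[n]) (z₀, w₀)).2.re) Filter.atTop Filter.atTop := by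
  set A := Real.exp (-α) / (1 - Real.exp (-α)) with hA
  have he : Real.exp (-α) < 1 := Real.exp_lt_one_iff.mpr (by linarith)
  have hApos : 0 < A := div_pos (Real.exp_pos _) (by linarith)
  have hAeq : (A + 1) * Real.exp (-α) = A := by
    have hne : 1 - Real.exp (-α) ≠ 0 := by linarith
    rw [hA]; field_simp; ring
  have step : ∀ z w : ℂ, z.re > w.re + α + A * Real.exp (-w.re) →
      (Complex.exp (-z) + 2 * z - w).re > z.re + α + A * Real.exp (-z.re) := by
    intro z w hzw
    have h1 : -Real.exp (-z.re) ≤ (Complex.exp (-z)).re := by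
      have h2 := Complex.abs_re_le_norm (Complex.exp (-z))
      rw [Complex.norm_exp, Complex.neg_re] at h2
      have h3 := neg_abs_le (Complex.exp (-z)).re
      linarith [le_abs_self (Complex.exp (-z)).re]
    have hpos : 0 < A * Real.exp (-w.re) := mul_pos hApos (Real.exp_pos _)
    have h3 : Real.exp (-z.re) < Real.exp (-α) * Real.exp (-w.re) := by
      rw [← Real.exp_add]
      exact Real.exp_lt_exp.mpr (by linarith)
    have h4 : (A + 1) * Real.exp (-z.re) < A * Real.exp (-w.re) := by
      calc (A + 1) * Real.exp (-z.re) < (A + 1) * (Real.exp (-α) * Real.exp (-w.re)) :=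
            mul_lt_mul_of_pos_left h3 (by linarith)
        _ = A * Real.exp (-w.re) := by rw [← mul_assoc, hAeq]
    have hre : (Complex.exp (-z) + 2 * z - w).re
        = (Complex.exp (-z)).re + 2 * z.re - w.re := by simp
    rw [hre]; linarith
  have key : ∀ n : ℕ,
      ((F^[n]) (z₀, w₀)).1.re >
        ((F^[n]) (z₀, w₀)).2.re + α + A * Real.exp (-((F^[n]) (z₀, w₀)).2.re) ∧
      z₀.re + n * α ≤ ((F^[n]) (z₀, w₀)).1.re := by
    intro n
    induction n with
    | zero => simpa using h
    | succ n ih =>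
      obtain ⟨ih1, ih2⟩ := ih
      rw [Function.iterate_succ_apply', hF]
      set p := (F^[n]) (z₀, w₀) with hp
      have hs := step p.1 p.2 ih1
      refine ⟨hs, ?_⟩
      have hpos : 0 < A * Real.exp (-p.1.re) := mul_pos hApos (Real.exp_pos _)
      push_cast
      linarith
  have main : ∀ n : ℕ, 1 ≤ n → z₀.re + n * α < ((F^[n]) (z₀, w₀)).1.re := by
    intro n hn
    match n, hn with
    | (m + 1), _ =>
      obtain ⟨ih1, ih2⟩ := key m
      rw [Function.iterate_succ_apply', hF]
      set p := (F^[m]) (z₀, w₀) with hp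
      have hs := step p.1 p.2 ih1
      have hpos : 0 < A * Real.exp (-p.1.re) := mul_pos hApos (Real.exp_pos _)
      push_cast
      linarith
  have hz : Filter.Tendsto (fun n : ℕ => ((F^[n]) (z₀, w₀)).1.re) Filter.atTop Filter.atTop := by
    apply Filter.tendsto_atTop_mono (fun n => (key n).2)
    exact Filter.tendsto_atTop_add_const_left _ _
      ((tendsto_natCast_atTop_atTop (R := ℝ)).atTop_mul_const hα)
  refine ⟨main, hz, ?_⟩
  have hw : ∀ n : ℕ, ((F^[n + 1]) (z₀, w₀)).2 = ((F^[n]) (z₀, w₀)).1 := by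
    intro n
    rw [Function.iterate_succ_apply', hF]
  rw [← Filter.tendsto_add_atTop_iff_nat 1]
  have : (fun n : ℕ => ((F^[n + 1]) (z₀, w₀)).2.re) = fun n : ℕ => ((F^[n]) (z₀, w₀)).1.re := by
    funext n; rw [hw]
  rw [this]
  exact hz
end

section
/- Let f : ℂ → ℂ be entire, a ∈ ℂ with 0 < |a| < 1, and F(z,w) = (f(z) + aw, az). Let 0 < a'' < |a| < a' < 1 and let D₁ ⊂⊂ D₂ ⊂ ℂ be open disks with compact containment. Then there exists α > 0 such that: whenever s ∈ ℂ is a constant with sup_{z ∈ closure(D₂)} |f(z) − s| ≤ α, the map F satisfies a''·‖(z,w) − (z',w')‖ ≤ ‖F(z,w) − F(z',w')‖ ≤ a'·‖(z,w) − (z',w')‖ for all z, z' ∈ closure(D₁) and all w, w' ∈ ℂ. -/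
open Metric Complex

set_option maxHeartbeats 1000000 in
/-- If `f` is close enough to a constant on the larger disk, then
`F(z,w) = (f z + a w, a z)` is bi-Lipschitz with constants `a'' < |a| < a'`
(Euclidean norm) on `closure D₁ × ℂ`. -/
theorem stmt15 (f : ℂ → ℂ) (hf : Differentiable ℂ f) (a : ℂ)
    (ha0 : 0 < ‖a‖) (ha1 : ‖a‖ < 1)
    (a'' a' : ℝ) (h1 : 0 < a'') (h2 : a'' < ‖a‖)
    (h3 : ‖a‖ < a') (h4 : a' < 1)
    (c₁ c₂ : ℂ) (r₁ r₂ : ℝ) (hr₁ : 0 < r₁) (hr₂ : 0 < r₂)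
    (hcc : Metric.closedBall c₁ r₁ ⊆ Metric.ball c₂ r₂) :
    ∃ α > (0 : ℝ), ∀ s : ℂ,
      (∀ z ∈ Metric.closedBall c₂ r₂, ‖f z - s‖ ≤ α) →
      ∀ z z' : ℂ, z ∈ Metric.closedBall c₁ r₁ → z' ∈ Metric.closedBall c₁ r₁ →
      ∀ w w' : ℂ,
        a'' * Real.sqrt (‖z - z'‖ ^ 2 + ‖w - w'‖ ^ 2) ≤
          Real.sqrt (‖(f z + a * w) - (f z' + a * w')‖ ^ 2 +
            ‖a * z - a * z'‖ ^ 2) ∧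
        Real.sqrt (‖(f z + a * w) - (f z' + a * w')‖ ^ 2 +
            ‖a * z - a * z'‖ ^ 2) ≤
          a' * Real.sqrt (‖z - z'‖ ^ 2 + ‖w - w'‖ ^ 2) := by
  set A := ‖a‖ with hA
  -- the gap between the two balls
  set ρ : ℝ := r₂ - dist c₁ c₂ - r₁ with hρdef
  have hρ : 0 < ρ := by
    by_cases hc : c₁ = c₂
    · have : c₁ + r₁ ∈ Metric.ball c₂ r₂ :=
        hcc (by simp [dist_eq, abs_of_pos hr₁])
      simp [Metric.mem_ball, hc, dist_eq, abs_of_pos hr₁] at this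
      simp only [hρdef, hc, dist_self]
      linarith
    · set t : ℝ := r₁ / ‖c₁ - c₂‖ with ht
      have hcc' : (0:ℝ) < ‖c₁ - c₂‖ := by
        simpa [norm_pos_iff, sub_ne_zero] using hc
      have htpos : 0 < t := by positivity
      set p : ℂ := c₁ + (t : ℂ) * (c₁ - c₂) with hp
      have hp1 : p ∈ Metric.closedBall c₁ r₁ := by
        simp only [Metric.mem_closedBall, dist_eq, hp, add_sub_cancel_left, norm_mul,
          Complex.norm_real, Real.norm_eq_abs, abs_of_pos htpos]
        rw [ht]; field_simp; exact le_rfl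
      have hp2 := hcc hp1
      simp only [Metric.mem_ball, dist_eq, hp] at hp2
      have heq : c₁ + (t : ℂ) * (c₁ - c₂) - c₂ = ((1 + t : ℝ) : ℂ) * (c₁ - c₂) := by
        push_cast; ring
      rw [heq, norm_mul, Complex.norm_real, Real.norm_eq_abs, abs_of_pos (by linarith)] at hp2
      have : (1 + t) * ‖c₁ - c₂‖ = ‖c₁ - c₂‖ + r₁ := by
        rw [ht]; field_simp
      rw [this] at hp2
      have hdist : dist c₁ c₂ = ‖c₁ - c₂‖ := dist_eq c₁ c₂
      simp only [hρdef, hdist]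
      linarith
  -- the Lipschitz constant
  set L : ℝ := min 1 (min ((a' ^ 2 - A ^ 2) / (A + 1)) (A * (A ^ 2 - a'' ^ 2))) with hLdef
  have hA2 : a'' ^ 2 < A ^ 2 := by nlinarith
  have hA3 : A ^ 2 < a' ^ 2 := by nlinarith
  have hL : 0 < L := by
    apply lt_min one_pos
    apply lt_min
    · apply div_pos (by linarith) (by linarith)
    · nlinarith
  have hL1 : L ≤ 1 := min_le_left _ _
  have hL2 : L * (A + 1) ≤ a' ^ 2 - A ^ 2 := by
    have hm : L ≤ (a' ^ 2 - A ^ 2) / (A + 1) := (min_le_right _ _).trans (min_le_left _ _)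
    calc L * (A + 1) ≤ (a' ^ 2 - A ^ 2) / (A + 1) * (A + 1) := by
          apply mul_le_mul_of_nonneg_right hm (by linarith)
      _ = a' ^ 2 - A ^ 2 := by field_simp
  have hL3 : L ≤ A * (A ^ 2 - a'' ^ 2) := (min_le_right _ _).trans (min_le_right _ _)
  refine ⟨L * ρ, by positivity, ?_⟩
  intro s hs z z' hz hz' w w'
  -- Cauchy estimate: |f'| ≤ L on closedBall c₁ r₁
  have hderiv : ∀ z₀ ∈ Metric.closedBall c₁ r₁, ‖deriv f z₀‖ ≤ L := by
    intro z₀ hz₀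
    have hd : DiffContOnCl ℂ (fun z => f z - s) (Metric.ball z₀ ρ) :=
      (hf.sub_const s).diffContOnCl
    have hC : ∀ x ∈ Metric.sphere z₀ ρ, ‖f x - s‖ ≤ L * ρ := by
      intro x hx
      have hx2 : x ∈ Metric.closedBall c₂ r₂ := by
        simp only [Metric.mem_closedBall]
        have hd1 : dist x z₀ = ρ := hx
        have hd2 : dist z₀ c₁ ≤ r₁ := hz₀
        calc dist x c₂ ≤ dist x z₀ + dist z₀ c₁ + dist c₁ c₂ := dist_triangle4 _ _ _ _
          _ ≤ ρ + r₁ + dist c₁ c₂ := by linarith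
          _ = r₂ := by rw [hρdef]; ring
      simpa using hs x hx2
    have := norm_deriv_le_of_forall_mem_sphere_norm_le hρ hd hC
    rw [deriv_sub_const] at this
    calc ‖deriv f z₀‖ ≤ L * ρ / ρ := this
      _ = L := by field_simp
  -- Lipschitz bound on the disk
  have hLip : ‖f z - f z'‖ ≤ L * ‖z - z'‖ := by
    have := (convex_closedBall c₁ r₁).norm_image_sub_le_of_norm_deriv_le
      (fun x _ => hf.differentiableAt) hderiv hz' hz
    simpa using this
  -- now pure algebra
  set x := ‖z - z'‖ with hx
  set y := ‖w - w'‖ with hy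
  set P := ‖(f z + a * w) - (f z' + a * w')‖ with hP
  have hxn : 0 ≤ x := norm_nonneg _
  have hyn : 0 ≤ y := norm_nonneg _
  have hPn : 0 ≤ P := norm_nonneg _
  have hAn : 0 ≤ A := ha0.le
  have haz : ‖a * z - a * z'‖ = A * x := by
    rw [← mul_sub, norm_mul]
  have hsplit : (f z + a * w) - (f z' + a * w') = (f z - f z') + a * (w - w') := by ring
  have hPub : P ≤ L * x + A * y := by
    rw [hP, hsplit]
    calc ‖(f z - f z') + a * (w - w')‖ ≤
        ‖f z - f z'‖ + ‖a * (w - w')‖ := norm_add_le _ _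
      _ ≤ L * x + A * y := by rw [norm_mul]; exact add_le_add hLip le_rfl
  have hPlb : A * y - L * x ≤ P := by
    have key := norm_sub_le ((f z - f z') + a * (w - w')) (f z - f z')
    rw [add_sub_cancel_left] at key
    simp only [norm_mul] at key
    rw [hP, hsplit]
    linarith
  rw [haz]
  constructor
  · -- lower bound
    rw [show a'' * Real.sqrt (x ^ 2 + y ^ 2) = Real.sqrt (a'' ^ 2 * (x ^ 2 + y ^ 2)) by
      rw [Real.sqrt_mul (sq_nonneg _), Real.sqrt_sq h1.le]]
    apply Real.sqrt_le_sqrt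
    rcases le_or_gt (A * y) (L * x) with hcase | hcase
    · -- y small compared to x : |a z - a z'| term alone suffices
      have hy2 : A ^ 2 * y ^ 2 ≤ L ^ 2 * x ^ 2 := by nlinarith
      have e0 : A ^ 2 - a'' ^ 2 ≤ 1 := by nlinarith
      have e1 : L ^ 2 ≤ A ^ 2 * (A ^ 2 - a'' ^ 2) := by nlinarith
      have t1 : A ^ 2 * (a'' ^ 2 * y ^ 2) ≤ a'' ^ 2 * (L ^ 2 * x ^ 2) :=
        by nlinarith [mul_le_mul_of_nonneg_left hy2 (sq_nonneg a'')]
      have t2 : a'' ^ 2 * L ^ 2 ≤ A ^ 2 * (A ^ 2 - a'' ^ 2) := by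
        nlinarith [mul_nonneg (show (0:ℝ) ≤ 1 - a'' ^ 2 by nlinarith) (sq_nonneg L)]
      have key : A ^ 2 * (a'' ^ 2 * (x ^ 2 + y ^ 2)) ≤ A ^ 2 * (A ^ 2 * x ^ 2) := by
        nlinarith [mul_le_mul_of_nonneg_right t2 (sq_nonneg x)]
      have : a'' ^ 2 * (x ^ 2 + y ^ 2) ≤ A ^ 2 * x ^ 2 :=
        le_of_mul_le_mul_left key (by positivity)
      nlinarith [sq_nonneg P]
    · have h0 : 0 ≤ A * y - L * x := by linarith
      have hsq : (A * y - L * x) ^ 2 ≤ P ^ 2 := pow_le_pow_left₀ h0 hPlb 2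
      have hLA : L * A ≤ A ^ 2 - a'' ^ 2 := by nlinarith
      nlinarith [mul_nonneg (mul_nonneg hL.le hAn) (sq_nonneg (x - y)), sq_nonneg (L * x)]
  · -- upper bound
    rw [show a' * Real.sqrt (x ^ 2 + y ^ 2) = Real.sqrt (a' ^ 2 * (x ^ 2 + y ^ 2)) by
      rw [Real.sqrt_mul (sq_nonneg _), Real.sqrt_sq (by linarith)]]
    apply Real.sqrt_le_sqrt
    have hsq : P ^ 2 ≤ (L * x + A * y) ^ 2 :=
      pow_le_pow_left₀ hPn hPub 2
    have hLL : L ^ 2 ≤ L := by nlinarith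
    have e2 : 0 ≤ L * A * (x - y) ^ 2 := by positivity
    have e3 : A ^ 2 + L * A + L ^ 2 ≤ a' ^ 2 := by nlinarith
    have e4 : (A ^ 2 + L * A + L ^ 2) * (x ^ 2 + y ^ 2) ≤ a' ^ 2 * (x ^ 2 + y ^ 2) :=
      mul_le_mul_of_nonneg_right e3 (by positivity)
    have e5 : 0 ≤ L ^ 2 * y ^ 2 := by positivity
    calc P ^ 2 + (A * x) ^ 2 ≤ (L * x + A * y) ^ 2 + (A * x) ^ 2 := by linarith
      _ = (A ^ 2 + L * A + L ^ 2) * (x ^ 2 + y ^ 2) - L * A * (x - y) ^ 2 - L ^ 2 * y ^ 2 := by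
          ring
      _ ≤ a' ^ 2 * (x ^ 2 + y ^ 2) := by linarith
end
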